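/- For c ≥ 6, the counts e(c,b) satisfy the recursion e(c,b) = e(c−2,b) + 2·e(c−2,b−1) + 2·e(c−3,b−1). -/

import Mathlib

open Classical

/-- The number of sign changes in a finite sequence of integers. -/
def signChanges (l : List ℤ) : ℕ :=
  ((l.zip l.tail).filter (fun p => p.1 * p.2 < 0)).length

/-- The sum of the absolute values of the entries. -/
def absSum (l : List ℤ) : ℕ := (l.map Int.natAbs).sum

/-- An even continued fraction representation: a nonempty even-length
sequence of nonzero integers. -/
def IsECF (l : List ℤ) : Prop :=
  l ≠ [] ∧ Even l.length ∧ ∀ x ∈ l, x ≠ 0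

/-- Palindromic or anti-palindromic sequences. -/
def IsPalOrAnti (l : List ℤ) : Prop :=
  l.reverse = l ∨ l.reverse = l.map (fun x => -x)

/-- The set `E(c)` of even continued fractions with crossing number `c`. -/
def Ecross (c : ℕ) : Set (List ℤ) :=
  {l | IsECF l ∧ (2 * absSum l : ℤ) - signChanges l = c}

/-- The set `E(c,b)` of even continued fractions with crossing number `c`
and braid index `b`. -/
def Eset (c b : ℕ) : Set (List ℤ) :=
  {l | IsECF l ∧ (2 * absSum l : ℤ) - signChanges l = c ∧
    (absSum l : ℤ) - signChanges l + 1 = b}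

noncomputable def e (c b : ℕ) : ℕ := (Eset c b).ncard

noncomputable def eTot (c : ℕ) : ℕ := (Ecross c).ncard

noncomputable def ep (c b : ℕ) : ℕ := (Eset c b ∩ {l | IsPalOrAnti l}).ncard

noncomputable def epTot (c : ℕ) : ℕ := (Ecross c ∩ {l | IsPalOrAnti l}).ncard


/- ### Auxiliary machinery for the proof ### -/

/-- sign-change indicator for a pair -/
def chg (a b : ℤ) : ℕ := if a * b < 0 then 1 else 0

lemma chg_eq (a b : ℤ) :
    chg a b = if (0 < a ∧ b < 0) ∨ (a < 0 ∧ 0 < b) then 1 else 0 := by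
  simp only [chg, mul_neg_iff]

lemma signChanges_nil : signChanges [] = 0 := rfl

lemma signChanges_singleton (a : ℤ) : signChanges [a] = 0 := rfl

lemma signChanges_cons_cons (a b : ℤ) (l : List ℤ) :
    signChanges (a :: b :: l) = chg a b + signChanges (b :: l) := by
  simp only [signChanges, List.tail, List.zip, List.zipWith, List.filter, chg]
  split_ifs with h <;> simp [h, Nat.add_comm]

lemma absSum_nil : absSum [] = 0 := rfl

lemma absSum_cons (a : ℤ) (l : List ℤ) : absSum (a :: l) = a.natAbs + absSum l := by
  simp [absSum]

lemma chg_congr_left {a a' : ℤ} (b : ℤ) (h1 : 0 < a ↔ 0 < a') (h2 : a < 0 ↔ a' < 0) :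
    chg a b = chg a' b := by
  simp only [chg_eq]
  refine if_congr ?_ rfl rfl
  constructor <;> intro h <;> [skip; skip] <;> tauto

lemma chg_congr_right {b b' : ℤ} (a : ℤ) (h1 : 0 < b ↔ 0 < b') (h2 : b < 0 ↔ b' < 0) :
    chg a b = chg a b' := by
  simp only [chg_eq]
  refine if_congr ?_ rfl rfl
  constructor <;> intro h <;> tauto

def sg (a : ℤ) : ℤ := if 0 < a then 1 else -1

lemma sg_spec {a : ℤ} (ha : a ≠ 0) : (sg a = 1 ∧ 0 < a) ∨ (sg a = -1 ∧ a < 0) := by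
  rcases lt_or_gt_of_ne ha with h | h
  · right; exact ⟨if_neg (by omega), h⟩
  · left; exact ⟨if_pos h, h⟩

lemma chg_iff_congr {a a' : ℤ} (b : ℤ) (h1 : 0 < a ↔ 0 < a') (h2 : a < 0 ↔ a' < 0) :
    chg a b = chg a' b := by
  simp only [chg_eq]
  refine if_congr ?_ rfl rfl
  tauto

lemma chg_iff_congr' {b b' : ℤ} (a : ℤ) (h1 : 0 < b ↔ 0 < b') (h2 : b < 0 ↔ b' < 0) :
    chg a b = chg a b' := by
  simp only [chg_eq]
  refine if_congr ?_ rfl rfl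
  tauto

lemma chg_inc_left (a b : ℤ) (ha : a ≠ 0) : chg (a + sg a) b = chg a b := by
  rcases sg_spec ha with ⟨h1, h2⟩ | ⟨h1, h2⟩ <;> rw [h1] <;>
    exact chg_iff_congr b (by omega) (by omega)

lemma chg_inc_right (a b : ℤ) (hb : b ≠ 0) : chg a (b + sg b) = chg a b := by
  rcases sg_spec hb with ⟨h1, h2⟩ | ⟨h1, h2⟩ <;> rw [h1] <;>
    exact chg_iff_congr' a (by omega) (by omega)

lemma chg_dec_left (a b : ℤ) (ha : 2 ≤ a.natAbs) : chg (a - sg a) b = chg a b := by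
  have ha' : a ≠ 0 := by omega
  rcases sg_spec ha' with ⟨h1, h2⟩ | ⟨h1, h2⟩ <;> rw [h1] <;>
    exact chg_iff_congr b (by omega) (by omega)

lemma chg_dec_right (a b : ℤ) (hb : 2 ≤ b.natAbs) : chg a (b - sg b) = chg a b := by
  have hb' : b ≠ 0 := by omega
  rcases sg_spec hb' with ⟨h1, h2⟩ | ⟨h1, h2⟩ <;> rw [h1] <;>
    exact chg_iff_congr' a (by omega) (by omega)

-- concrete values
lemma chg_same (a b : ℤ) (h : 0 < a * b) : chg a b = 0 := by
  simp [chg]; nlinarith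

lemma chg_opp (a b : ℤ) (h : a * b < 0) : chg a b = 1 := by
  simp [chg, h]

lemma sg_natAbs {a : ℤ} (ha : a ≠ 0) : (sg a).natAbs = 1 := by
  rcases sg_spec ha with ⟨h1, _⟩ | ⟨h1, _⟩ <;> rw [h1] <;> rfl

lemma sg_ne_zero {a : ℤ} (ha : a ≠ 0) : sg a ≠ 0 := by
  rcases sg_spec ha with ⟨h1, _⟩ | ⟨h1, _⟩ <;> rw [h1] <;> decide

lemma add_sg_natAbs {a : ℤ} (ha : a ≠ 0) : (a + sg a).natAbs = a.natAbs + 1 := by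
  rcases sg_spec ha with ⟨h1, h2⟩ | ⟨h1, h2⟩ <;> rw [h1] <;> omega

lemma add_sg_ne_zero {a : ℤ} (ha : a ≠ 0) : a + sg a ≠ 0 := by
  rcases sg_spec ha with ⟨h1, h2⟩ | ⟨h1, h2⟩ <;> rw [h1] <;> omega

lemma sg_add_sg {a : ℤ} (ha : a ≠ 0) : sg (a + sg a) = sg a := by
  rcases sg_spec ha with ⟨h1, h2⟩ | ⟨h1, h2⟩ <;> rw [h1] <;> simp only [sg]
  · rw [if_pos (by omega)]
  · rw [if_neg (by omega)]

lemma sub_sg_natAbs {a : ℤ} (ha : 2 ≤ a.natAbs) : (a - sg a).natAbs = a.natAbs - 1 := by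
  have ha' : a ≠ 0 := by omega
  rcases sg_spec ha' with ⟨h1, h2⟩ | ⟨h1, h2⟩ <;> rw [h1] <;> omega

lemma sub_sg_ne_zero {a : ℤ} (ha : 2 ≤ a.natAbs) : a - sg a ≠ 0 := by
  have ha' : a ≠ 0 := by omega
  rcases sg_spec ha' with ⟨h1, h2⟩ | ⟨h1, h2⟩ <;> rw [h1] <;> omega

lemma sg_sub_sg {a : ℤ} (ha : 2 ≤ a.natAbs) : sg (a - sg a) = sg a := by
  have ha' : a ≠ 0 := by omega
  rcases sg_spec ha' with ⟨h1, h2⟩ | ⟨h1, h2⟩ <;> rw [h1] <;> simp only [sg]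
  · rw [if_pos (by omega)]
  · rw [if_neg (by omega)]

lemma sg_mul_self_pos {a : ℤ} (ha : a ≠ 0) : 0 < sg a * a := by
  rcases sg_spec ha with ⟨h1, h2⟩ | ⟨h1, h2⟩ <;> rw [h1] <;> omega

lemma sg_mul_sub_pos {a : ℤ} (ha : 2 ≤ a.natAbs) : 0 < sg a * (a - sg a) := by
  have ha' : a ≠ 0 := by omega
  rcases sg_spec ha' with ⟨h1, h2⟩ | ⟨h1, h2⟩ <;> rw [h1] <;> omega

lemma unit_sg_pos {a c : ℤ} (ha : a.natAbs = 1) (h : 0 < a * c) : sg c = a := by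
  have ha' : a = 1 ∨ a = -1 := by omega
  have hc : c ≠ 0 := by rintro rfl; simp at h
  rcases ha' with rfl | rfl <;> rcases sg_spec hc with ⟨h1, h2⟩ | ⟨h1, h2⟩
  · rw [h1]
  · exfalso; nlinarith
  · exfalso; nlinarith
  · rw [h1]

lemma unit_sg_neg {a c : ℤ} (ha : a.natAbs = 1) (h : a * c < 0) : sg c = -a := by
  have ha' : a = 1 ∨ a = -1 := by omega
  have hc : c ≠ 0 := by rintro rfl; simp at h
  rcases ha' with rfl | rfl <;> rcases sg_spec hc with ⟨h1, h2⟩ | ⟨h1, h2⟩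
  · exfalso; nlinarith
  · simp [h1]
  · simp [h1]
  · exfalso; nlinarith

lemma chg_self (a : ℤ) (ha : a ≠ 0) : chg a a = 0 :=
  chg_same a a (mul_self_pos.mpr ha)

def Qset (S L : ℤ) : Set (List ℤ) :=
  {l | l ≠ [] ∧ Even l.length ∧ (∀ x ∈ l, x ≠ 0) ∧ (absSum l : ℤ) = S ∧
    (signChanges l : ℤ) = L}

noncomputable def NQ (S L : ℤ) : ℕ := (Qset S L).ncard

lemma finite_lists (s : Set ℤ) (hs : s.Finite) (n : ℕ) :
    {l : List ℤ | l.length ≤ n ∧ ∀ x ∈ l, x ∈ s}.Finite := by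
  induction n with
  | zero =>
    refine Set.Finite.subset (Set.finite_singleton []) ?_
    rintro l ⟨hl, -⟩
    simpa using List.length_eq_zero_iff.mp (Nat.le_zero.mp hl)
  | succ n ih =>
    refine Set.Finite.subset ((Set.finite_singleton ([] : List ℤ)).union
      (Set.Finite.image2 List.cons hs ih)) ?_
    rintro l ⟨hl, hx⟩
    cases l with
    | nil => exact Or.inl rfl
    | cons a t =>
      refine Or.inr (Set.mem_image2_of_mem (hx a (by simp)) ⟨?_, ?_⟩)
      · simpa using hl
      · exact fun x hx' => hx x (by simp [hx'])

lemma length_le_absSum {l : List ℤ} (h : ∀ x ∈ l, x ≠ 0) : l.length ≤ absSum l := by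
  induction l with
  | nil => simp [absSum]
  | cons a t ih =>
    have ha : a ≠ 0 := h a (by simp)
    have : 1 ≤ a.natAbs := by omega
    simp only [List.length_cons, absSum, List.map_cons, List.sum_cons]
    have := ih (fun x hx => h x (by simp [hx]))
    simp only [absSum] at this
    omega

lemma mem_natAbs_le_absSum {l : List ℤ} {x : ℤ} (h : x ∈ l) : x.natAbs ≤ absSum l := by
  induction l with
  | nil => simp at h
  | cons a t ih =>
    simp only [absSum, List.map_cons, List.sum_cons]
    rcases List.mem_cons.mp h with rfl | h'
    · omega
    · have := ih h'; simp only [absSum] at this; omega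

lemma signChanges_lt_length {l : List ℤ} (h : l ≠ []) : signChanges l < l.length := by
  have h1 : signChanges l ≤ (l.zip l.tail).length := List.length_filter_le _ _
  have h2 : (l.zip l.tail).length = min l.length l.tail.length := List.length_zip
  have h3 : l.tail.length = l.length - 1 := by simp
  have h4 : 1 ≤ l.length := by
    cases l with
    | nil => simp at h
    | cons a t => simp
  omega

lemma Qset_finite (S L : ℤ) : (Qset S L).Finite := by
  refine Set.Finite.subset (finite_lists (Set.Icc (-S) S) (Set.finite_Icc _ _) S.toNat) ?_
  rintro l ⟨hne, hev, hnz, hS, hL⟩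
  constructor
  · have := length_le_absSum hnz
    omega
  · intro x hx
    have := mem_natAbs_le_absSum hx
    simp only [Set.mem_Icc]
    omega

lemma mem_Qset_bounds {S L : ℤ} {l : List ℤ} (h : l ∈ Qset S L) : 0 ≤ L ∧ L < S := by
  obtain ⟨hne, hev, hnz, hS, hL⟩ := h
  have h1 := signChanges_lt_length hne
  have h2 := length_le_absSum hnz
  omega

lemma NQ_eq_zero {S L : ℤ} (h : L < 0 ∨ S ≤ L) : NQ S L = 0 := by
  have : Qset S L = ∅ := by
    ext l
    simp only [Set.mem_empty_iff_false, iff_false]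
    intro hl
    have := mem_Qset_bounds hl
    omega
  simp [NQ, this]

def g1 : List ℤ → List ℤ
  | (a :: t) => (a + sg a) :: t
  | [] => []
def g2 : List ℤ → List ℤ
  | (a :: b :: t) =>
      if a.natAbs = 1 then a :: (b + sg b) :: t
      else sg a :: sg a :: (a - sg a) :: b :: t
  | l => l
def g3 : List ℤ → List ℤ
  | (h :: t) => (-sg h) :: (-sg h) :: h :: t
  | [] => []
def g4 : List ℤ → List ℤ
  | (h :: t) => (-sg h) :: sg h :: h :: t
  | [] => []
def g5 : List ℤ → List ℤ
  | (h :: t) => sg h :: (-sg h) :: h :: t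
  | [] => []
def tag : List ℤ → ℕ
  | (a :: b :: c :: _) =>
      if 2 ≤ a.natAbs then 0
      else if 2 ≤ b.natAbs then 1
      else if a = b then (if 0 < b * c then 1 else 2)
      else if 0 < b * c then 3 else 4
  | [a, _] => if 2 ≤ a.natAbs then 0 else 1
  | _ => 7

lemma g1_mem {S L : ℤ} {l : List ℤ} (hl : l ∈ Qset (S - 1) L) :
    g1 l ∈ Qset S L ∧ tag (g1 l) = 0 := by
  obtain ⟨hne, hev, hnz, hS, hL⟩ := hl
  obtain ⟨a, t, rfl⟩ : ∃ a t, l = a :: t := by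
    cases l with
    | nil => exact absurd rfl hne
    | cons a t => exact ⟨a, t, rfl⟩
  have ha : a ≠ 0 := hnz a (by simp)
  have habs : (a + sg a).natAbs = a.natAbs + 1 := add_sg_natAbs ha
  have hne0 : a + sg a ≠ 0 := add_sg_ne_zero ha
  obtain ⟨b, t', rfl⟩ : ∃ b t', t = b :: t' := by
    cases t with
    | nil => simp [Nat.even_iff] at hev
    | cons b t' => exact ⟨b, t', rfl⟩
  refine ⟨⟨by simp [g1], by simpa [g1] using hev, ?_, ?_, ?_⟩, ?_⟩
  · intro x hx
    simp only [g1, List.mem_cons] at hx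
    rcases hx with rfl | hx
    · exact hne0
    · exact hnz x (by simp [hx])
  · have hg : g1 ((a : ℤ) :: b :: t') = (a + sg a) :: b :: t' := rfl
    rw [hg, absSum_cons, habs]
    rw [absSum_cons] at hS
    omega
  · simp only [g1, signChanges_cons_cons, chg_inc_left a b ha]
    rw [signChanges_cons_cons] at hL
    omega
  · cases t' with
    | nil => simp only [g1, tag]; rw [if_pos (by omega)]
    | cons c t'' => simp only [g1, tag]; rw [if_pos (by omega)]

lemma Qset_shape {S L : ℤ} {l : List ℤ} (h : l ∈ Qset S L) :
    ∃ a b t, l = a :: b :: t := by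
  obtain ⟨hne, hev, -⟩ := h
  cases l with
  | nil => exact absurd rfl hne
  | cons a t =>
    cases t with
    | nil => simp [Nat.even_iff] at hev
    | cons b t' => exact ⟨a, b, t', rfl⟩

lemma g2_mem {S L : ℤ} {l : List ℤ} (hl : l ∈ Qset (S - 1) L) :
    g2 l ∈ Qset S L ∧ tag (g2 l) = 1 := by
  obtain ⟨a, b, t, rfl⟩ := Qset_shape hl
  obtain ⟨hne, hev, hnz, hS, hL⟩ := hl
  have ha : a ≠ 0 := hnz a (by simp)
  have hb : b ≠ 0 := hnz b (by simp)
  by_cases hu : a.natAbs = 1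
  · -- branch 1 : a :: (b + sg b) :: t
    have hg : g2 (a :: b :: t) = a :: (b + sg b) :: t := by simp [g2, hu]
    rw [hg]
    refine ⟨⟨by simp, by simpa using hev, ?_, ?_, ?_⟩, ?_⟩
    · intro x hx
      rcases List.mem_cons.mp hx with rfl | hx'
      · exact ha
      rcases List.mem_cons.mp hx' with rfl | hx''
      · exact add_sg_ne_zero hb
      · exact hnz x (by simp [hx''])
    · rw [absSum_cons, absSum_cons, add_sg_natAbs hb]
      rw [absSum_cons, absSum_cons] at hS
      omega
    · rw [signChanges_cons_cons] at hL
      cases t with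
      | nil =>
        rw [signChanges_cons_cons, chg_inc_right a b hb, signChanges_singleton]
        rw [signChanges_singleton] at hL
        exact hL
      | cons c t' =>
        rw [signChanges_cons_cons, chg_inc_right a b hb, signChanges_cons_cons,
          chg_inc_left b c hb]
        rw [signChanges_cons_cons] at hL
        exact hL
    · have h2 : 2 ≤ (b + sg b).natAbs := by rw [add_sg_natAbs hb]; omega
      cases t with
      | nil => simp only [tag]; rw [if_neg (by omega)]
      | cons c t' => simp only [tag]; rw [if_neg (by omega), if_pos h2]
  · -- branch 2 : sg a :: sg a :: (a - sg a) :: b :: t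
    have ha2 : 2 ≤ a.natAbs := by omega
    have hg : g2 (a :: b :: t) = sg a :: sg a :: (a - sg a) :: b :: t := by
      simp [g2, hu]
    rw [hg]
    refine ⟨⟨by simp, ?_, ?_, ?_, ?_⟩, ?_⟩
    · simp only [List.length_cons] at hev ⊢
      rw [Nat.even_iff] at hev ⊢; omega
    · intro x hx
      rcases List.mem_cons.mp hx with rfl | hx'
      · exact sg_ne_zero ha
      rcases List.mem_cons.mp hx' with rfl | hx''
      · exact sg_ne_zero ha
      rcases List.mem_cons.mp hx'' with rfl | hx'''
      · exact sub_sg_ne_zero ha2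
      · exact hnz x (List.mem_cons_of_mem _ hx''')
    · rw [absSum_cons, absSum_cons, absSum_cons, sg_natAbs ha, sub_sg_natAbs ha2]
      rw [absSum_cons] at hS
      omega
    · rw [signChanges_cons_cons, signChanges_cons_cons, signChanges_cons_cons,
        chg_self (sg a) (sg_ne_zero ha), chg_same (sg a) (a - sg a) (sg_mul_sub_pos ha2),
        chg_dec_left a b ha2]
      rw [signChanges_cons_cons] at hL
      omega
    · simp only [tag]
      rw [if_neg (by rw [sg_natAbs ha]; omega), if_neg (by rw [sg_natAbs ha]; omega),
        if_pos trivial, if_pos (sg_mul_sub_pos ha2)]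

lemma g3_mem {S L : ℤ} {l : List ℤ} (hl : l ∈ Qset (S - 2) (L - 1)) :
    g3 l ∈ Qset S L ∧ tag (g3 l) = 2 := by
  obtain ⟨h, b, t, rfl⟩ := Qset_shape hl
  obtain ⟨hne, hev, hnz, hS, hL⟩ := hl
  have hh : h ≠ 0 := hnz h (by simp)
  have hmul : -sg h * h < 0 := by have := sg_mul_self_pos hh; nlinarith
  simp only [g3]
  refine ⟨⟨by simp, ?_, ?_, ?_, ?_⟩, ?_⟩
  · simp only [List.length_cons] at hev ⊢
    rw [Nat.even_iff] at hev ⊢; omega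
  · intro x hx
    rcases List.mem_cons.mp hx with rfl | hx'
    · simpa using sg_ne_zero hh
    rcases List.mem_cons.mp hx' with rfl | hx''
    · simpa using sg_ne_zero hh
    · exact hnz x hx''
  · rw [absSum_cons, absSum_cons]
    have : (-sg h).natAbs = 1 := by rw [Int.natAbs_neg]; exact sg_natAbs hh
    rw [this]
    omega
  · rw [signChanges_cons_cons, signChanges_cons_cons,
      chg_self (-sg h) (by simpa using sg_ne_zero hh), chg_opp (-sg h) h hmul]
    omega
  · simp only [tag]
    have h1 : (-sg h).natAbs = 1 := by rw [Int.natAbs_neg]; exact sg_natAbs hh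
    rw [if_neg (by omega), if_neg (by omega), if_pos trivial, if_neg (by omega)]

lemma g4_mem {S L : ℤ} {l : List ℤ} (hl : l ∈ Qset (S - 2) (L - 1)) :
    g4 l ∈ Qset S L ∧ tag (g4 l) = 3 := by
  obtain ⟨h, b, t, rfl⟩ := Qset_shape hl
  obtain ⟨hne, hev, hnz, hS, hL⟩ := hl
  have hh : h ≠ 0 := hnz h (by simp)
  have hsgpos := sg_mul_self_pos hh
  have hmul : -sg h * sg h < 0 := by
    rcases sg_spec hh with ⟨h1, _⟩ | ⟨h1, _⟩ <;> rw [h1] <;> norm_num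
  simp only [g4]
  refine ⟨⟨by simp, ?_, ?_, ?_, ?_⟩, ?_⟩
  · simp only [List.length_cons] at hev ⊢
    rw [Nat.even_iff] at hev ⊢; omega
  · intro x hx
    rcases List.mem_cons.mp hx with rfl | hx'
    · simpa using sg_ne_zero hh
    rcases List.mem_cons.mp hx' with rfl | hx''
    · exact sg_ne_zero hh
    · exact hnz x hx''
  · rw [absSum_cons, absSum_cons]
    have h1 : (-sg h).natAbs = 1 := by rw [Int.natAbs_neg]; exact sg_natAbs hh
    rw [h1, sg_natAbs hh]
    omega
  · rw [signChanges_cons_cons, signChanges_cons_cons,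
      chg_opp (-sg h) (sg h) hmul, chg_same (sg h) h hsgpos]
    omega
  · simp only [tag]
    have h1 : (-sg h).natAbs = 1 := by rw [Int.natAbs_neg]; exact sg_natAbs hh
    have h2 := sg_natAbs hh
    have hne2 : ¬(-sg h = sg h) := by
      intro hc; have := sg_ne_zero hh; omega
    rw [if_neg (by omega), if_neg (by omega), if_neg hne2, if_pos hsgpos]

lemma g5_mem {S L : ℤ} {l : List ℤ} (hl : l ∈ Qset (S - 2) (L - 2)) :
    g5 l ∈ Qset S L ∧ tag (g5 l) = 4 := by
  obtain ⟨h, b, t, rfl⟩ := Qset_shape hl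
  obtain ⟨hne, hev, hnz, hS, hL⟩ := hl
  have hh : h ≠ 0 := hnz h (by simp)
  have hsgpos := sg_mul_self_pos hh
  have hmul : sg h * -sg h < 0 := by
    rcases sg_spec hh with ⟨h1, _⟩ | ⟨h1, _⟩ <;> rw [h1] <;> norm_num
  have hmul2 : -sg h * h < 0 := by nlinarith
  simp only [g5]
  refine ⟨⟨by simp, ?_, ?_, ?_, ?_⟩, ?_⟩
  · simp only [List.length_cons] at hev ⊢
    rw [Nat.even_iff] at hev ⊢; omega
  · intro x hx
    rcases List.mem_cons.mp hx with rfl | hx'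
    · exact sg_ne_zero hh
    rcases List.mem_cons.mp hx' with rfl | hx''
    · simpa using sg_ne_zero hh
    · exact hnz x hx''
  · rw [absSum_cons, absSum_cons]
    have h1 : (-sg h).natAbs = 1 := by rw [Int.natAbs_neg]; exact sg_natAbs hh
    rw [h1, sg_natAbs hh]
    omega
  · rw [signChanges_cons_cons, signChanges_cons_cons,
      chg_opp (sg h) (-sg h) hmul, chg_opp (-sg h) h hmul2]
    omega
  · simp only [tag]
    have h1 : (-sg h).natAbs = 1 := by rw [Int.natAbs_neg]; exact sg_natAbs hh
    have h2 := sg_natAbs hh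
    have hne2 : ¬(sg h = -sg h) := by
      intro hc; have := sg_ne_zero hh; omega
    rw [if_neg (by omega), if_neg (by omega), if_neg hne2, if_neg (by omega)]

lemma add_sg_inj {a a' : ℤ} (ha : a ≠ 0) (ha' : a' ≠ 0)
    (h : a + sg a = a' + sg a') : a = a' := by
  rcases sg_spec ha with ⟨h1, h2⟩ | ⟨h1, h2⟩ <;>
    rcases sg_spec ha' with ⟨h1', h2'⟩ | ⟨h1', h2'⟩ <;> rw [h1, h1'] at h <;> omega

lemma g1_injOn {S L : ℤ} : Set.InjOn g1 (Qset S L) := by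
  rintro l hl m hm he
  obtain ⟨a, b, t, rfl⟩ := Qset_shape hl
  obtain ⟨a', b', t', rfl⟩ := Qset_shape hm
  have ha : a ≠ 0 := hl.2.2.1 a (by simp)
  have ha' : a' ≠ 0 := hm.2.2.1 a' (by simp)
  simp only [g1, List.cons.injEq] at he
  obtain ⟨h1, h2, h3⟩ := he
  rw [add_sg_inj ha ha' h1, h2, h3]

lemma g2_injOn {S L : ℤ} : Set.InjOn g2 (Qset S L) := by
  rintro l hl m hm he
  obtain ⟨a, b, t, rfl⟩ := Qset_shape hl
  obtain ⟨a', b', t', rfl⟩ := Qset_shape hm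
  have ha : a ≠ 0 := hl.2.2.1 a (by simp)
  have hb : b ≠ 0 := hl.2.2.1 b (by simp)
  have ha' : a' ≠ 0 := hm.2.2.1 a' (by simp)
  have hb' : b' ≠ 0 := hm.2.2.1 b' (by simp)
  by_cases hu : a.natAbs = 1 <;> by_cases hu' : a'.natAbs = 1
  · simp only [g2, if_pos hu, if_pos hu', List.cons.injEq] at he
    obtain ⟨h1, h2, h3⟩ := he
    rw [h1, add_sg_inj hb hb' h2, h3]
  · simp only [g2, if_pos hu, if_neg hu', List.cons.injEq] at he
    exfalso
    have h2 := he.2.1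
    have e1 : (b + sg b).natAbs = b.natAbs + 1 := add_sg_natAbs hb
    have e2 : (sg a').natAbs = 1 := sg_natAbs ha'
    omega
  · simp only [g2, if_neg hu, if_pos hu', List.cons.injEq] at he
    exfalso
    have h2 := he.2.1
    have e1 : (b' + sg b').natAbs = b'.natAbs + 1 := add_sg_natAbs hb'
    have e2 : (sg a).natAbs = 1 := sg_natAbs ha
    omega
  · simp only [g2, if_neg hu, if_neg hu', List.cons.injEq] at he
    obtain ⟨h1, h2, h3, h4, h5⟩ := he
    have : a = a' := by omega
    rw [this, h4, h5]

lemma g3_injOn {S L : ℤ} : Set.InjOn g3 (Qset S L) := by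
  rintro l hl m hm he
  obtain ⟨a, b, t, rfl⟩ := Qset_shape hl
  obtain ⟨a', b', t', rfl⟩ := Qset_shape hm
  simp only [g3, List.cons.injEq] at he
  obtain ⟨-, -, h3, h4, h5⟩ := he
  rw [h3, h4, h5]

lemma g4_injOn {S L : ℤ} : Set.InjOn g4 (Qset S L) := by
  rintro l hl m hm he
  obtain ⟨a, b, t, rfl⟩ := Qset_shape hl
  obtain ⟨a', b', t', rfl⟩ := Qset_shape hm
  simp only [g4, List.cons.injEq] at he
  obtain ⟨-, -, h3, h4, h5⟩ := he
  rw [h3, h4, h5]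

lemma g5_injOn {S L : ℤ} : Set.InjOn g5 (Qset S L) := by
  rintro l hl m hm he
  obtain ⟨a, b, t, rfl⟩ := Qset_shape hl
  obtain ⟨a', b', t', rfl⟩ := Qset_shape hm
  simp only [g5, List.cons.injEq] at he
  obtain ⟨-, -, h3, h4, h5⟩ := he
  rw [h3, h4, h5]

lemma cover {S L : ℤ} (hS3 : 3 ≤ S) {l : List ℤ} (hl : l ∈ Qset S L) :
    l ∈ g1 '' Qset (S-1) L ∪ g2 '' Qset (S-1) L ∪ g3 '' Qset (S-2) (L-1) ∪
      g4 '' Qset (S-2) (L-1) ∪ g5 '' Qset (S-2) (L-2) := by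
  obtain ⟨a, b, t, rfl⟩ := Qset_shape hl
  obtain ⟨hne, hev, hnz, hS, hL⟩ := hl
  have ha : a ≠ 0 := hnz a (by simp)
  have hb : b ≠ 0 := hnz b (by simp)
  by_cases h2a : 2 ≤ a.natAbs
  · -- image of g1
    refine Or.inl (Or.inl (Or.inl (Or.inl ⟨(a - sg a) :: b :: t, ⟨by simp,
      by simpa using hev, ?_, ?_, ?_⟩, ?_⟩)))
    · intro x hx
      rcases List.mem_cons.mp hx with rfl | hx'
      · exact sub_sg_ne_zero h2a
      · exact hnz x (List.mem_cons_of_mem _ hx')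
    · rw [absSum_cons, sub_sg_natAbs h2a]
      rw [absSum_cons] at hS
      omega
    · rw [signChanges_cons_cons, chg_dec_left a b h2a]
      rw [signChanges_cons_cons] at hL
      omega
    · simp only [g1, sg_sub_sg h2a, sub_add_cancel]
  · have hua : a.natAbs = 1 := by omega
    by_cases h2b : 2 ≤ b.natAbs
    · -- image of g2, branch 1
      refine Or.inl (Or.inl (Or.inl (Or.inr ⟨a :: (b - sg b) :: t, ⟨by simp,
        by simpa using hev, ?_, ?_, ?_⟩, ?_⟩)))
      · intro x hx
        rcases List.mem_cons.mp hx with rfl | hx'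
        · exact ha
        rcases List.mem_cons.mp hx' with rfl | hx''
        · exact sub_sg_ne_zero h2b
        · exact hnz x (List.mem_cons_of_mem _ (List.mem_cons_of_mem _ hx''))
      · rw [absSum_cons, absSum_cons, sub_sg_natAbs h2b]
        rw [absSum_cons, absSum_cons] at hS
        omega
      · cases t with
        | nil =>
          rw [signChanges_cons_cons, chg_dec_right a b h2b, signChanges_singleton]
          rw [signChanges_cons_cons, signChanges_singleton] at hL
          omega
        | cons c t' =>
          rw [signChanges_cons_cons, chg_dec_right a b h2b, signChanges_cons_cons,
            chg_dec_left b c h2b]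
          rw [signChanges_cons_cons, signChanges_cons_cons] at hL
          omega
      · simp only [g2, if_pos hua, sg_sub_sg h2b, sub_add_cancel]
    · have hub : b.natAbs = 1 := by omega
      have ht : t ≠ [] := by
        rintro rfl
        rw [absSum_cons, absSum_cons, absSum_nil] at hS
        omega
      obtain ⟨c, t', rfl⟩ : ∃ c t', t = c :: t' := by
        cases t with
        | nil => exact absurd rfl ht
        | cons c t' => exact ⟨c, t', rfl⟩
      have hc : c ≠ 0 := hnz c (by simp)
      rw [absSum_cons, absSum_cons, absSum_cons] at hS
      rw [signChanges_cons_cons, signChanges_cons_cons] at hL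
      have hev' : Even (c :: t').length := by
        simp only [List.length_cons] at hev ⊢
        rw [Nat.even_iff] at hev ⊢; omega
      have hnz' : ∀ x ∈ c :: t', x ≠ 0 :=
        fun x hx => hnz x (List.mem_cons_of_mem _ (List.mem_cons_of_mem _ hx))
      by_cases hab : a = b
      · subst hab
        rw [chg_self a ha] at hL
        by_cases hac : 0 < a * c
        · -- image of g2, branch 2
          have hsgc : sg c = a := unit_sg_pos hua hac
          obtain ⟨d, t'', rfl⟩ : ∃ d t'', t' = d :: t'' := by
            cases t' with
            | nil => simp [Nat.even_iff] at hev'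
            | cons d t'' => exact ⟨d, t'', rfl⟩
          rw [chg_same a c hac] at hL
          rw [signChanges_cons_cons] at hL
          refine Or.inl (Or.inl (Or.inl (Or.inr ⟨(c + sg c) :: d :: t'', ⟨by simp,
            ?_, ?_, ?_, ?_⟩, ?_⟩)))
          · simp only [List.length_cons] at hev ⊢
            rw [Nat.even_iff] at hev ⊢; omega
          · intro x hx
            rcases List.mem_cons.mp hx with rfl | hx'
            · exact add_sg_ne_zero hc
            · exact hnz' x (List.mem_cons_of_mem _ hx')
          · rw [absSum_cons, add_sg_natAbs hc]
            omega
          · rw [signChanges_cons_cons, chg_inc_left c d hc]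
            omega
          · have h2c : ¬((c + sg c).natAbs = 1) := by
              have := add_sg_natAbs hc; omega
            have hg : g2 ((c + sg c) :: d :: t'') =
                sg (c + sg c) :: sg (c + sg c) :: ((c + sg c) - sg (c + sg c)) :: d :: t'' := by
              simp only [g2, if_neg h2c]
            rw [hg, sg_add_sg hc, hsgc, add_sub_cancel_right]
        · have hac' : a * c < 0 := by
            have := mul_ne_zero ha hc; omega
          -- image of g3
          have hsgc : sg c = -a := unit_sg_neg hua hac'
          rw [chg_opp a c hac'] at hL
          refine Or.inl (Or.inl (Or.inr ⟨c :: t', ⟨by simp, hev', hnz', ?_, ?_⟩, ?_⟩))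
          · rw [absSum_cons]; omega
          · omega
          · simp only [g3, hsgc, neg_neg]
      · have hba : b = -a := by omega
        have hab' : a * b < 0 := by
          have h0 : 0 < a * a := mul_self_pos.mpr ha
          rw [hba]; nlinarith
        rw [chg_opp a b hab'] at hL
        by_cases hbc : 0 < b * c
        · -- image of g4
          have hsgc : sg c = b := unit_sg_pos hub hbc
          rw [chg_same b c hbc] at hL
          refine Or.inl (Or.inr ⟨c :: t', ⟨by simp, hev', hnz', ?_, ?_⟩, ?_⟩)
          · rw [absSum_cons]; omega
          · omega
          · simp only [g4, hsgc, hba, neg_neg]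
        · have hbc' : b * c < 0 := by
            have := mul_ne_zero hb hc; omega
          -- image of g5
          have hsgc : sg c = -b := unit_sg_neg hub hbc'
          rw [chg_opp b c hbc'] at hL
          refine Or.inr ⟨c :: t', ⟨by simp, hev', hnz', ?_, ?_⟩, ?_⟩
          · rw [absSum_cons]; omega
          · omega
          · simp only [g5, hsgc, hba, neg_neg]

lemma main_identity (S L : ℤ) (h6 : 6 ≤ 2*S - L) :
    NQ S L = NQ (S-2) (L-2) + 2 * NQ (S-1) L + 2 * NQ (S-2) (L-1) := by
  by_cases hL0 : L < 0
  · rw [NQ_eq_zero (Or.inl hL0), NQ_eq_zero (Or.inl (by omega)),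
      NQ_eq_zero (Or.inl hL0), NQ_eq_zero (Or.inl (by omega))]
  by_cases hSL : S ≤ L
  · rw [NQ_eq_zero (Or.inr hSL), NQ_eq_zero (Or.inr (by omega)),
      NQ_eq_zero (Or.inr (by omega)), NQ_eq_zero (Or.inr (by omega))]
  push_neg at hL0 hSL
  have hS3 : 3 ≤ S := by omega
  set U1 := g1 '' Qset (S-1) L with hU1
  set U2 := g2 '' Qset (S-1) L with hU2
  set U3 := g3 '' Qset (S-2) (L-1) with hU3
  set U4 := g4 '' Qset (S-2) (L-1) with hU4
  set U5 := g5 '' Qset (S-2) (L-2) with hU5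
  have hcover : Qset S L = U1 ∪ U2 ∪ U3 ∪ U4 ∪ U5 := by
    apply Set.Subset.antisymm
    · intro l hl; exact cover hS3 hl
    · rintro l ((((⟨m, hm, rfl⟩ | ⟨m, hm, rfl⟩) | ⟨m, hm, rfl⟩) | ⟨m, hm, rfl⟩) |
        ⟨m, hm, rfl⟩)
      · exact (g1_mem hm).1
      · exact (g2_mem hm).1
      · exact (g3_mem hm).1
      · exact (g4_mem hm).1
      · exact (g5_mem hm).1
  have t1 : ∀ l ∈ U1, tag l = 0 := by rintro _ ⟨m, hm, rfl⟩; exact (g1_mem hm).2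
  have t2 : ∀ l ∈ U2, tag l = 1 := by rintro _ ⟨m, hm, rfl⟩; exact (g2_mem hm).2
  have t3 : ∀ l ∈ U3, tag l = 2 := by rintro _ ⟨m, hm, rfl⟩; exact (g3_mem hm).2
  have t4 : ∀ l ∈ U4, tag l = 3 := by rintro _ ⟨m, hm, rfl⟩; exact (g4_mem hm).2
  have t5 : ∀ l ∈ U5, tag l = 4 := by rintro _ ⟨m, hm, rfl⟩; exact (g5_mem hm).2
  have disj : ∀ (A B : Set (List ℤ)) (i j : ℕ), i ≠ j → (∀ l ∈ A, tag l = i) →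
      (∀ l ∈ B, tag l = j) → Disjoint A B := by
    intro A B i j hij hA hB
    rw [Set.disjoint_left]
    intro l hlA hlB
    exact hij ((hA l hlA).symm.trans (hB l hlB))
  have f1 : U1.Finite := (Qset_finite _ _).image _
  have f2 : U2.Finite := (Qset_finite _ _).image _
  have f3 : U3.Finite := (Qset_finite _ _).image _
  have f4 : U4.Finite := (Qset_finite _ _).image _
  have f5 : U5.Finite := (Qset_finite _ _).image _
  have d12 : Disjoint U1 U2 := disj _ _ 0 1 (by omega) t1 t2
  have d3 : Disjoint (U1 ∪ U2) U3 := by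
    rw [Set.disjoint_union_left]
    exact ⟨disj _ _ 0 2 (by omega) t1 t3, disj _ _ 1 2 (by omega) t2 t3⟩
  have d4 : Disjoint (U1 ∪ U2 ∪ U3) U4 := by
    rw [Set.disjoint_union_left, Set.disjoint_union_left]
    exact ⟨⟨disj _ _ 0 3 (by omega) t1 t4, disj _ _ 1 3 (by omega) t2 t4⟩,
      disj _ _ 2 3 (by omega) t3 t4⟩
  have d5 : Disjoint (U1 ∪ U2 ∪ U3 ∪ U4) U5 := by
    rw [Set.disjoint_union_left, Set.disjoint_union_left, Set.disjoint_union_left]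
    exact ⟨⟨⟨disj _ _ 0 4 (by omega) t1 t5, disj _ _ 1 4 (by omega) t2 t5⟩,
      disj _ _ 2 4 (by omega) t3 t5⟩, disj _ _ 3 4 (by omega) t4 t5⟩
  have hcard : NQ S L = U1.ncard + U2.ncard + U3.ncard + U4.ncard + U5.ncard := by
    rw [NQ, hcover, Set.ncard_union_eq d5 (((f1.union f2).union f3).union f4) f5,
      Set.ncard_union_eq d4 ((f1.union f2).union f3) f4,
      Set.ncard_union_eq d3 (f1.union f2) f3,
      Set.ncard_union_eq d12 f1 f2]
  rw [hcard, hU1, hU2, hU3, hU4, hU5,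
    Set.ncard_image_of_injOn g1_injOn, Set.ncard_image_of_injOn g2_injOn,
    Set.ncard_image_of_injOn g3_injOn, Set.ncard_image_of_injOn g4_injOn,
    Set.ncard_image_of_injOn g5_injOn]
  show (Qset (S-1) L).ncard + (Qset (S-1) L).ncard + (Qset (S-2) (L-1)).ncard +
    (Qset (S-2) (L-1)).ncard + (Qset (S-2) (L-2)).ncard = _
  show _ = NQ (S-2) (L-2) + 2 * NQ (S-1) L + 2 * NQ (S-2) (L-1)
  unfold NQ
  ring

lemma Eset_eq_Qset (c b : ℕ) :
    Eset c b = Qset ((c : ℤ) - b + 1) ((c : ℤ) - 2 * b + 2) := by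
  ext l
  simp only [Eset, Qset, IsECF, Set.mem_setOf_eq]
  constructor
  · rintro ⟨⟨h1, h2, h3⟩, h4, h5⟩
    exact ⟨h1, h2, h3, by omega, by omega⟩
  · rintro ⟨h1, h2, h3, h4, h5⟩
    exact ⟨⟨h1, h2, h3⟩, by omega, by omega⟩

lemma e_eq (c b : ℕ) : e c b = NQ ((c : ℤ) - b + 1) ((c : ℤ) - 2 * b + 2) := by
  rw [e, Eset_eq_Qset]; rfl

theorem e_recursion (c b : ℕ) (hc : 6 ≤ c) :
    e c b = e (c - 2) b + 2 * e (c - 2) (b - 1) + 2 * e (c - 3) (b - 1) := by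
  rcases Nat.eq_zero_or_pos b with rfl | hb
  · have z1 : e c 0 = 0 := by
      rw [e_eq]; exact NQ_eq_zero (Or.inr (by omega))
    have z2 : e (c - 2) 0 = 0 := by
      rw [e_eq]; exact NQ_eq_zero (Or.inr (by omega))
    have z3 : e (c - 3) 0 = 0 := by
      rw [e_eq]; exact NQ_eq_zero (Or.inr (by omega))
    simp [z1, z2, z3]
  · rw [e_eq, e_eq, e_eq, e_eq]
    have a1 : ((c - 2 : ℕ) : ℤ) - (b : ℤ) + 1 = ((c : ℤ) - b + 1) - 2 := by omega
    have a2 : ((c - 2 : ℕ) : ℤ) - 2 * (b : ℤ) + 2 = ((c : ℤ) - 2 * b + 2) - 2 := by omega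
    have a3 : ((c - 2 : ℕ) : ℤ) - ((b - 1 : ℕ) : ℤ) + 1 = ((c : ℤ) - b + 1) - 1 := by omega
    have a4 : ((c - 2 : ℕ) : ℤ) - 2 * ((b - 1 : ℕ) : ℤ) + 2 = (c : ℤ) - 2 * b + 2 := by
      omega
    have a5 : ((c - 3 : ℕ) : ℤ) - ((b - 1 : ℕ) : ℤ) + 1 = ((c : ℤ) - b + 1) - 2 := by omega
    have a6 : ((c - 3 : ℕ) : ℤ) - 2 * ((b - 1 : ℕ) : ℤ) + 2 = ((c : ℤ) - 2 * b + 2) - 1 := by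
      omega
    rw [a1, a2, a3, a4, a5, a6]
    exact main_identity _ _ (by omega)
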